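/- Convergence of sub-level sets under locally uniform convergence: let X be a locally compact, σ-compact metric space, μ a Borel measure on X that is finite on compact sets, and t ∈ ℝ. Let u_i, u : X → ℝ be continuous functions with u_i → u locally uniformly, and let E ⊆ X be a measurable set such that μ(({u_i < t} Δ E) ∩ K) → 0 as i → ∞ for every compact K ⊆ X. Then μ({u < t} ∖ E) = 0 and μ(E ∖ {u ≤ t}) = 0; that is, {u < t} ⊆ E ⊆ {u ≤ t} up to μ-measure zero. -/

import Mathlib

/-- Convergence of sub-level sets under locally uniform convergence: if `u_i → v`
locally uniformly and the sub-level sets `{u_i < t}` converge to `E` in `L¹_loc`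
(i.e. the measure of the symmetric difference in each compact set tends to zero),
then `{v < t} ⊆ E ⊆ {v ≤ t}` up to `μ`-measure zero. -/
theorem sublevel_sets_converge_of_tendstoLocallyUniformly
    {X : Type*} [MetricSpace X] [LocallyCompactSpace X] [SigmaCompactSpace X]
    [MeasurableSpace X] [BorelSpace X]
    (μ : MeasureTheory.Measure X) [MeasureTheory.IsFiniteMeasureOnCompacts μ]
    (t : ℝ) (u : ℕ → X → ℝ) (v : X → ℝ)
    (hu : ∀ i, Continuous (u i)) (hv : Continuous v)
    (hconv : TendstoLocallyUniformly u v Filter.atTop)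
    (E : Set X) (hE : MeasurableSet E)
    (hL1 : ∀ K : Set X, IsCompact K →
      Filter.Tendsto (fun i => μ ((symmDiff {x | u i x < t} E) ∩ K))
        Filter.atTop (nhds 0)) :
    μ ({x | v x < t} \ E) = 0 ∧ μ (E \ {x | v x ≤ t}) = 0 := by
  -- reduce to compact sets
  have cover : ∀ S : Set X, (∀ K : Set X, IsCompact K → μ (S ∩ K) = 0) → μ S = 0 := by
    intro S h
    have hS : S = ⋃ n, S ∩ compactCovering X n := by
      rw [← Set.inter_iUnion, iUnion_compactCovering, Set.inter_univ]
    rw [hS]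
    exact MeasureTheory.measure_iUnion_null fun n => h _ (isCompact_compactCovering X n)
  have hunif : ∀ K : Set X, IsCompact K → ∀ ε : ℝ, 0 < ε →
      ∀ᶠ i in Filter.atTop, ∀ x ∈ K, dist (v x) (u i x) < ε := by
    intro K hKc ε hε
    have h1 : TendstoUniformlyOn u v Filter.atTop K :=
      (tendstoLocallyUniformlyOn_iff_tendstoUniformlyOn_of_compact hKc).mp
        (hconv.tendstoLocallyUniformlyOn)
    exact Metric.tendstoUniformlyOn_iff.mp h1 ε hε
  constructor
  · apply cover
    intro K hKc
    have key : ∀ n : ℕ, μ (({x | v x < t - (n + 1 : ℝ)⁻¹} \ E) ∩ K) = 0 := by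
      intro n
      have hεpos : (0 : ℝ) < (n + 1 : ℝ)⁻¹ := by positivity
      have hev : ∀ᶠ i in Filter.atTop,
          μ (({x | v x < t - (n + 1 : ℝ)⁻¹} \ E) ∩ K) ≤
            μ ((symmDiff {x | u i x < t} E) ∩ K) := by
        filter_upwards [hunif K hKc _ hεpos] with i hi
        apply MeasureTheory.measure_mono
        rintro x ⟨⟨hx1, hx2⟩, hxK⟩
        refine ⟨?_, hxK⟩
        left
        refine ⟨?_, hx2⟩
        have hd := hi x hxK
        rw [Real.dist_eq, abs_lt] at hd
        simp only [Set.mem_setOf_eq] at hx1 ⊢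
        linarith [hd.1]
      have := ge_of_tendsto (hL1 K hKc) hev
      exact le_antisymm (by simpa using this) zero_le
    have hU : ({x | v x < t} \ E) ∩ K =
        ⋃ n : ℕ, ({x | v x < t - (n + 1 : ℝ)⁻¹} \ E) ∩ K := by
      ext x
      simp only [Set.mem_iUnion, Set.mem_inter_iff, Set.mem_diff, Set.mem_setOf_eq]
      constructor
      · rintro ⟨⟨hx1, hx2⟩, hxK⟩
        obtain ⟨n, hn⟩ := exists_nat_one_div_lt (show (0:ℝ) < t - v x by linarith)
        exact ⟨n, ⟨by rw [one_div] at hn; linarith, hx2⟩, hxK⟩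
      · rintro ⟨n, ⟨⟨hx1, hx2⟩, hxK⟩⟩
        have : (0:ℝ) < (n + 1 : ℝ)⁻¹ := by positivity
        exact ⟨⟨by linarith, hx2⟩, hxK⟩
    rw [hU]
    exact MeasureTheory.measure_iUnion_null key
  · apply cover
    intro K hKc
    have key : ∀ n : ℕ, μ ((E ∩ {x | t + (n + 1 : ℝ)⁻¹ < v x}) ∩ K) = 0 := by
      intro n
      have hεpos : (0 : ℝ) < (n + 1 : ℝ)⁻¹ := by positivity
      have hev : ∀ᶠ i in Filter.atTop,
          μ ((E ∩ {x | t + (n + 1 : ℝ)⁻¹ < v x}) ∩ K) ≤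
            μ ((symmDiff {x | u i x < t} E) ∩ K) := by
        filter_upwards [hunif K hKc _ hεpos] with i hi
        apply MeasureTheory.measure_mono
        rintro x ⟨⟨hx1, hx2⟩, hxK⟩
        refine ⟨?_, hxK⟩
        right
        refine ⟨hx1, ?_⟩
        have hd := hi x hxK
        rw [Real.dist_eq, abs_lt] at hd
        simp only [Set.mem_setOf_eq] at hx2 ⊢
        intro h
        linarith [hd.2]
      have := ge_of_tendsto (hL1 K hKc) hev
      exact le_antisymm (by simpa using this) zero_le
    have hU : (E \ {x | v x ≤ t}) ∩ K =
        ⋃ n : ℕ, (E ∩ {x | t + (n + 1 : ℝ)⁻¹ < v x}) ∩ K := by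
      ext x
      simp only [Set.mem_iUnion, Set.mem_inter_iff, Set.mem_diff, Set.mem_setOf_eq, not_le]
      constructor
      · rintro ⟨⟨hx1, hx2⟩, hxK⟩
        obtain ⟨n, hn⟩ := exists_nat_one_div_lt (show (0:ℝ) < v x - t by linarith)
        exact ⟨n, ⟨hx1, by rw [one_div] at hn; linarith⟩, hxK⟩
      · rintro ⟨n, ⟨⟨hx1, hx2⟩, hxK⟩⟩
        have : (0:ℝ) < (n + 1 : ℝ)⁻¹ := by positivity
        exact ⟨⟨hx1, by linarith⟩, hxK⟩
    rw [hU]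
    exact MeasureTheory.measure_iUnion_null key
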